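/- Howard's identity for Stirling numbers of the first kind: [n over n-k] = ∑_{ℓ=0}^{k} C(n, 2k-ℓ) * [2k-ℓ over k-ℓ]_{≥2} for 0 ≤ k ≤ n, where [n over k] is the unsigned Stirling number of the first kind and [m over j]_{≥2} counts permutations of [m] with j cycles all of length at least 2. -/

import Mathlib

open Finset Equiv

/-- The number of cycles of a permutation of `Fin n`, counting fixed points as
1-cycles. -/
def cycleCount {n : ℕ} (σ : Equiv.Perm (Fin n)) : ℕ :=
  σ.cycleType.card + (Finset.univ.filter fun x => σ x = x).card

/-- The unsigned Stirling number of the first kind `[n over k]`: the number of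
permutations of `Fin n` with exactly `k` cycles. -/
noncomputable def stirFirst (n k : ℕ) : ℕ :=
  Nat.card {σ : Equiv.Perm (Fin n) // cycleCount σ = k}

/-- `[m over j]_{≥2}`: the number of permutations of `Fin m` with exactly `j`
cycles, all of length at least `2` (i.e. derangements with `j` cycles). -/
noncomputable def stirAssoc2 (m j : ℕ) : ℕ :=
  Nat.card {σ : Equiv.Perm (Fin m) // cycleCount σ = j ∧ ∀ x, σ x ≠ x}

lemma natCard_subtype_eq_filter {α : Type*} [Fintype α] (p : α → Prop) [DecidablePred p] :
    Nat.card {x // p x} = (Finset.univ.filter p).card := by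
  rw [Nat.card_eq_fintype_card, Fintype.card_subtype]

lemma cycleCount_eq {n : ℕ} (σ : Equiv.Perm (Fin n)) :
    cycleCount σ = σ.cycleType.card + (n - σ.support.card) := by
  rw [cycleCount]
  congr 1
  have h : (Finset.univ.filter fun x => σ x = x) = σ.supportᶜ := by
    ext x
    simp [Equiv.Perm.mem_support]
  rw [h, Finset.card_compl, Fintype.card_fin]

lemma support_card_le {n : ℕ} (σ : Equiv.Perm (Fin n)) : σ.support.card ≤ n := by
  simpa using Finset.card_le_univ σ.support

lemma derangement_iff_support {m : ℕ} (σ : Equiv.Perm (Fin m)) :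
    (∀ x, σ x ≠ x) ↔ σ.support = Finset.univ := by
  simp [Finset.eq_univ_iff_forall, Equiv.Perm.mem_support]

lemma stirAssoc2_eq_filter (m j : ℕ) :
    stirAssoc2 m j = (Finset.univ.filter
      (fun σ : Equiv.Perm (Fin m) =>
        σ.cycleType.card = j ∧ σ.support = Finset.univ)).card := by
  rw [stirAssoc2, natCard_subtype_eq_filter
    (fun σ : Equiv.Perm (Fin m) => cycleCount σ = j ∧ ∀ x, σ x ≠ x)]
  congr 1
  refine Finset.filter_congr fun σ _ => ?_
  constructor
  · rintro ⟨h1, h2⟩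
    have hs := (derangement_iff_support σ).1 h2
    refine ⟨?_, hs⟩
    rw [cycleCount_eq, hs] at h1
    simp only [Finset.card_univ, Fintype.card_fin, Nat.sub_self, Nat.add_zero] at h1
    exact h1
  · rintro ⟨h1, h2⟩
    have hd := (derangement_iff_support σ).2 h2
    refine ⟨?_, hd⟩
    rw [cycleCount_eq, h2]
    simp [h1]

lemma stirAssoc2_eq_zero {m j : ℕ} (h : m < 2 * j) : stirAssoc2 m j = 0 := by
  rw [stirAssoc2_eq_filter, Finset.card_eq_zero, Finset.filter_eq_empty_iff]
  rintro σ - ⟨h1, h2⟩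
  have hsum : σ.cycleType.sum = m := by
    rw [Equiv.Perm.sum_cycleType, h2, Finset.card_univ, Fintype.card_fin]
  have hle : σ.cycleType.card • 2 ≤ σ.cycleType.sum :=
    Multiset.card_nsmul_le_sum fun x hx => Equiv.Perm.two_le_of_mem_cycleType hx
  rw [h1, hsum, smul_eq_mul] at hle
  omega

lemma univ_map_asEmbedding {n : ℕ} (S : Finset (Fin n))
    (f : Fin S.card ≃ {x : Fin n // x ∈ S}) :
    (Finset.univ : Finset (Fin S.card)).map f.asEmbedding = S := by
  ext x
  simp only [Finset.mem_map, Finset.mem_univ, true_and, Equiv.asEmbedding_apply,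
    Function.comp_apply]
  constructor
  · rintro ⟨a, rfl⟩
    exact (f a).2
  · intro hx
    exact ⟨f.symm ⟨x, hx⟩, by simp⟩

/-- The key fiber count: permutations of `Fin n` with support exactly `S` and
`c` (nontrivial) cycles are in bijection with permutations of `Fin S.card`
with full support and `c` cycles. -/
lemma fiber_card (n : ℕ) (S : Finset (Fin n)) (c : ℕ) :
    (Finset.univ.filter fun σ : Equiv.Perm (Fin n) =>
        σ.cycleType.card = c ∧ σ.support = S).card
      = (Finset.univ.filter fun τ : Equiv.Perm (Fin S.card) =>
        τ.cycleType.card = c ∧ τ.support = Finset.univ).card := by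
  set f : Fin S.card ≃ {x : Fin n // x ∈ S} := S.equivFin.symm with hf
  symm
  apply Finset.card_bij (fun τ _ => τ.extendDomain f)
  · -- maps into
    intro τ hτ
    rw [Finset.mem_filter] at hτ ⊢
    obtain ⟨-, h1, h2⟩ := hτ
    refine ⟨Finset.mem_univ _, ?_, ?_⟩
    · rw [Equiv.Perm.cycleType_extendDomain, h1]
    · rw [Equiv.Perm.support_extend_domain, h2, univ_map_asEmbedding]
  · -- injective
    intro τ₁ h₁ τ₂ h₂ heq
    apply Equiv.ext
    intro x
    have := congrArg (fun g : Equiv.Perm (Fin n) => g ((f x : Fin n))) heq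
    rw [Equiv.Perm.extendDomain_apply_subtype _ f (f x).2,
        Equiv.Perm.extendDomain_apply_subtype _ f (f x).2] at this
    simp only [Subtype.coe_eta, Equiv.symm_apply_apply] at this
    exact f.injective (Subtype.coe_injective this)
  · -- surjective
    intro σ hσ
    rw [Finset.mem_filter] at hσ
    obtain ⟨-, h1, h2⟩ := hσ
    have hmem : ∀ x : Fin n, x ∈ S ↔ σ x ∈ S := by
      intro x
      rw [← h2]
      exact (Equiv.Perm.apply_mem_support (f := σ) (x := x)).symm
    set τ : Equiv.Perm (Fin S.card) :=
      f.symm.permCongr (σ.subtypePerm fun x => (hmem x).symm) with hτ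
    have hext : τ.extendDomain f = σ := by
      apply Equiv.ext
      intro x
      by_cases hx : x ∈ S
      · rw [Equiv.Perm.extendDomain_apply_subtype _ f hx]
        simp [hτ, Equiv.permCongr_apply, Equiv.Perm.subtypePerm_apply]
      · rw [Equiv.Perm.extendDomain_apply_not_subtype _ f hx]
        have hns : x ∉ σ.support := by rw [h2]; exact hx
        exact (Equiv.Perm.notMem_support.1 hns).symm
    refine ⟨τ, ?_, hext⟩
    rw [Finset.mem_filter]
    refine ⟨Finset.mem_univ _, ?_, ?_⟩
    · have hct : σ.cycleType = τ.cycleType := by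
        conv_lhs => rw [← hext]
        exact Equiv.Perm.cycleType_extendDomain f
      exact hct ▸ h1
    · have hsupp : Finset.map f.asEmbedding τ.support
          = Finset.map f.asEmbedding Finset.univ := by
        rw [univ_map_asEmbedding, ← Equiv.Perm.support_extend_domain f (g := τ), hext, h2]
      exact Finset.map_injective f.asEmbedding hsupp

/-- The count of permutations with `n - k` cycles and support `S`, as a
function of `S.card`. -/
lemma fiber_card_eval (n k : ℕ) (hk : k ≤ n) (S : Finset (Fin n)) :
    (Finset.univ.filter fun σ : Equiv.Perm (Fin n) =>
        cycleCount σ = n - k ∧ σ.support = S).card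
      = if k ≤ S.card then stirAssoc2 S.card (S.card - k) else 0 := by
  have hSn : S.card ≤ n := by simpa using Finset.card_le_univ S
  by_cases hkS : k ≤ S.card
  · rw [if_pos hkS, stirAssoc2_eq_filter, ← fiber_card n S (S.card - k)]
    congr 1
    apply Finset.filter_congr
    intro σ _
    have hsc := support_card_le σ
    rw [cycleCount_eq]
    constructor
    · rintro ⟨h1, rfl⟩
      exact ⟨by omega, rfl⟩
    · rintro ⟨h1, rfl⟩
      exact ⟨by omega, rfl⟩
  · rw [if_neg hkS, Finset.card_eq_zero, Finset.filter_eq_empty_iff]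
    rintro σ - ⟨h1, rfl⟩
    rw [cycleCount_eq] at h1
    have hsc := support_card_le σ
    omega

theorem howard_identity (n k : ℕ) (hk : k ≤ n) :
    stirFirst n (n - k) =
      ∑ l ∈ Finset.range (k + 1), n.choose (2 * k - l) * stirAssoc2 (2 * k - l) (k - l) := by
  have h1 : stirFirst n (n - k)
      = (Finset.univ.filter fun σ : Equiv.Perm (Fin n) => cycleCount σ = n - k).card := by
    rw [stirFirst, natCard_subtype_eq_filter]
  -- decompose by support
  have h2 : (Finset.univ.filter fun σ : Equiv.Perm (Fin n) => cycleCount σ = n - k).card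
      = ∑ S ∈ (Finset.univ : Finset (Fin n)).powerset,
        (Finset.univ.filter fun σ : Equiv.Perm (Fin n) =>
          cycleCount σ = n - k ∧ σ.support = S).card := by
    rw [Finset.card_eq_sum_card_fiberwise
      (f := fun σ : Equiv.Perm (Fin n) => σ.support)
      (t := (Finset.univ : Finset (Fin n)).powerset)
      (fun σ _ => Finset.mem_powerset.2 (Finset.subset_univ _))]
    refine Finset.sum_congr rfl fun S _ => ?_
    rw [Finset.filter_filter]
  set g : ℕ → ℕ := fun m => if k ≤ m then stirAssoc2 m (m - k) else 0 with hg
  have h3 : ∑ S ∈ (Finset.univ : Finset (Fin n)).powerset,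
        (Finset.univ.filter fun σ : Equiv.Perm (Fin n) =>
          cycleCount σ = n - k ∧ σ.support = S).card
      = ∑ S ∈ (Finset.univ : Finset (Fin n)).powerset, g S.card :=
    Finset.sum_congr rfl fun S _ => fiber_card_eval n k hk S
  have h4 : ∑ S ∈ (Finset.univ : Finset (Fin n)).powerset, g S.card
      = ∑ m ∈ Finset.range (n + 1), n.choose m * g m := by
    rw [Finset.sum_powerset_apply_card]
    simp [Finset.card_univ, smul_eq_mul]
  -- change summation range from n+1 to 2k+1
  have hzero : ∀ m, 2 * k < m → n.choose m * g m = 0 := by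
    intro m hm
    rcases le_or_gt k m with h | h
    · have : stirAssoc2 m (m - k) = 0 := stirAssoc2_eq_zero (by omega)
      simp [hg, h, this]
    · omega
  have h5 : ∑ m ∈ Finset.range (n + 1), n.choose m * g m
      = ∑ m ∈ Finset.range (n + 2 * k + 1), n.choose m * g m := by
    apply Finset.sum_subset
    · intro x hx
      simp only [Finset.mem_range] at hx ⊢
      omega
    · intro x _ hx
      simp only [Finset.mem_range, not_lt] at hx
      have : n < x := by omega
      rw [Nat.choose_eq_zero_of_lt this, Nat.zero_mul]
  have h6 : ∑ m ∈ Finset.range (2 * k + 1), n.choose m * g m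
      = ∑ m ∈ Finset.range (n + 2 * k + 1), n.choose m * g m := by
    apply Finset.sum_subset
    · intro x hx
      simp only [Finset.mem_range] at hx ⊢
      omega
    · intro x _ hx
      simp only [Finset.mem_range, not_lt] at hx
      exact hzero x (by omega)
  have h7 : ∑ m ∈ Finset.range (2 * k + 1), n.choose m * g m
      = ∑ m ∈ Finset.Icc k (2 * k), n.choose m * g m := by
    symm
    apply Finset.sum_subset
    · intro x hx
      simp only [Finset.mem_Icc] at hx
      simp only [Finset.mem_range]
      omega
    · intro x hx hx'
      simp only [Finset.mem_range] at hx
      simp only [Finset.mem_Icc, not_and, not_le] at hx'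
      have : ¬ k ≤ x := by
        by_contra hc
        exact absurd (hx' hc) (by omega)
      simp [hg, this]
  have h8 : ∑ m ∈ Finset.Icc k (2 * k), n.choose m * g m
      = ∑ l ∈ Finset.range (k + 1),
          n.choose (2 * k - l) * stirAssoc2 (2 * k - l) (k - l) := by
    apply Finset.sum_nbij' (i := fun m => 2 * k - m) (j := fun l => 2 * k - l)
    · intro m hm
      simp only [Finset.mem_Icc] at hm
      simp only [Finset.mem_range]
      omega
    · intro l hl
      simp only [Finset.mem_range] at hl
      simp only [Finset.mem_Icc]
      omega
    · intro m hm
      simp only [Finset.mem_Icc] at hm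
      omega
    · intro l hl
      simp only [Finset.mem_range] at hl
      omega
    · intro m hm
      simp only [Finset.mem_Icc] at hm
      have e1 : 2 * k - (2 * k - m) = m := by omega
      have e2 : k - (2 * k - m) = m - k := by omega
      rw [e1, e2]
      simp [hg, hm.1]
  rw [h1, h2, h3, h4, h5, ← h6, h7, h8]
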